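/- arXiv:2510.11133 — 2 statements merged into one kernel-verified Lean document; each statement's English description precedes it below -/
import Mathlib

section
/- (Causal Preservation) Let y ∈ {+1, −1}, let e_1, …, e_d be an orthonormal basis of the real inner product space ℝ^d, and let z, Δq, Δp ∈ ℝ^d with coefficients α_i = ⟨z, e_i⟩, γ_i = ⟨Δq, e_i⟩, and ⟨Δp, e_i⟩ = η_i γ_i for real numbers η_i. Fix 1 ≤ m ≤ d and define the trimmed representation ẑ = z − Σ_{i=1}^m ⟨z, e_i⟩ e_i. Suppose the causal boundary classifies z correctly: y⟨z, Δp⟩ > 0. If at least one of the following three conditions holds: (a) y·Σ_{i=1}^m η_i α_i γ_i = 0, (b) y·Σ_{i=1}^m η_i α_i γ_i < 0, or (c) 0 < y·Σ_{i=1}^m η_i α_i γ_i < y·Σ_{i=1}^d η_i α_i γ_i, then the trimmed representation is still classified correctly by the causal boundary: y⟨ẑ, Δp⟩ > 0. -/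
open scoped RealInnerProductSpace BigOperators

/-- Proposition 2 (Causal Preservation): if the causal boundary `Δp` classifies `z`
correctly and one of the three conditions on the top-`m` sums holds, then the trimmed
representation is still classified correctly by the causal boundary. -/
theorem tact_causal_preservation
    (d m : ℕ) (hm1 : 1 ≤ m) (hmd : m ≤ d)
    (y : ℝ) (hy : y = 1 ∨ y = -1)
    (e : OrthonormalBasis (Fin d) ℝ (EuclideanSpace ℝ (Fin d)))
    (z Δq Δp : EuclideanSpace ℝ (Fin d))
    (α γ η : Fin d → ℝ)
    (hα : ∀ i, α i = ⟪z, e i⟫)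
    (hγ : ∀ i, γ i = ⟪Δq, e i⟫)
    (hη : ∀ i, ⟪Δp, e i⟫ = η i * γ i)
    (zhat : EuclideanSpace ℝ (Fin d))
    (hzhat : zhat = z - ∑ i ∈ Finset.univ.filter (fun i : Fin d => (i : ℕ) < m),
      ⟪z, e i⟫ • e i)
    (hcausal : y * ⟪z, Δp⟫ > 0)
    (hcond :
      (y * ∑ i ∈ Finset.univ.filter (fun i : Fin d => (i : ℕ) < m), η i * (α i * γ i) = 0) ∨
      (y * ∑ i ∈ Finset.univ.filter (fun i : Fin d => (i : ℕ) < m), η i * (α i * γ i) < 0) ∨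
      (0 < y * ∑ i ∈ Finset.univ.filter (fun i : Fin d => (i : ℕ) < m), η i * (α i * γ i) ∧
       y * ∑ i ∈ Finset.univ.filter (fun i : Fin d => (i : ℕ) < m), η i * (α i * γ i) <
         y * ∑ i : Fin d, η i * (α i * γ i))) :
    y * ⟪zhat, Δp⟫ > 0 := by
  set S := Finset.univ.filter (fun i : Fin d => (i : ℕ) < m) with hS
  have hzp : ⟪z, Δp⟫ = ∑ i : Fin d, η i * (α i * γ i) := by
    rw [← e.sum_inner_mul_inner z Δp]
    refine Finset.sum_congr rfl fun i _ => ?_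
    have h := hη i; rw [real_inner_comm] at h
    rw [h, hα]; ring
  have hsub : ⟪zhat, Δp⟫ = ⟪z, Δp⟫ - ∑ i ∈ S, η i * (α i * γ i) := by
    rw [hzhat, inner_sub_left, sum_inner]
    congr 1
    refine Finset.sum_congr rfl fun i _ => ?_
    have h := hη i; rw [real_inner_comm] at h
    rw [real_inner_smul_left, h, hα]; ring
  have key : y * ⟪zhat, Δp⟫ = y * ⟪z, Δp⟫ - y * ∑ i ∈ S, η i * (α i * γ i) := by
    rw [hsub]; ring
  rcases hcond with h | h | ⟨h1, h2⟩
  · rw [key, h]; linarith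
  · rw [key]; linarith
  · rw [key, hzp]; linarith
end

section
/- Let y ∈ {+1, −1}, let e_1, …, e_d be an orthonormal basis of the real inner product space ℝ^d, and let z, Δq, Δp ∈ ℝ^d with coefficients α_i = ⟨z, e_i⟩, γ_i = ⟨Δq, e_i⟩, and ⟨Δp, e_i⟩ = η_i γ_i for real numbers η_i. Fix 1 ≤ m ≤ d and define the trimmed vectors ẑ = z − Σ_{i=1}^m ⟨z, e_i⟩ e_i and Δq̂ = Δq − Σ_{i=1}^m ⟨Δq, e_i⟩ e_i. Suppose z is correctly classified by the learned boundary: y⟨z, Δq⟩ > 0; the removed component positively contributes to the prediction: y⟨z − ẑ, Δq⟩ > 0; the trimmed representation satisfies the causal-preservation property y⟨ẑ, Δp⟩ > 0; and the sums Σ_{i=m+1}^d η_i α_i γ_i and Σ_{i=m+1}^d α_i γ_i have the same sign (their signs, as elements of {−1, 0, +1}, are equal). Then the trimmed prediction remains correct: y⟨ẑ, Δq̂⟩ > 0. -/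
open scoped RealInnerProductSpace BigOperators

lemma pos_of_sign_eq_one {S : ℝ} (h : Real.sign S = 1) : 0 < S := by
  rcases lt_trichotomy S 0 with h' | h' | h'
  · rw [Real.sign_of_neg h'] at h; norm_num at h
  · rw [h', Real.sign_zero] at h; norm_num at h
  · exact h'

lemma neg_of_sign_eq_neg_one {S : ℝ} (h : Real.sign S = -1) : S < 0 := by
  rcases lt_trichotomy S 0 with h' | h' | h'
  · exact h'
  · rw [h', Real.sign_zero] at h; norm_num at h
  · rw [Real.sign_of_pos h'] at h; norm_num at h

/-- Proposition 3, case 2: if `z` is correctly classified by the learned boundary, the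
removed component positively contributes to the prediction, the trimmed representation
satisfies the causal-preservation property, and the remaining coefficient sums for the
causal and learned boundaries have the same sign, then the trimmed prediction remains
correct. -/
theorem tact_preserves_correct_prediction_positive_removed
    (d m : ℕ) (hm1 : 1 ≤ m) (hmd : m ≤ d)
    (y : ℝ) (hy : y = 1 ∨ y = -1)
    (e : OrthonormalBasis (Fin d) ℝ (EuclideanSpace ℝ (Fin d)))
    (z Δq Δp : EuclideanSpace ℝ (Fin d))
    (α γ η : Fin d → ℝ)
    (hα : ∀ i, α i = ⟪z, e i⟫)
    (hγ : ∀ i, γ i = ⟪Δq, e i⟫)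
    (hη : ∀ i, ⟪Δp, e i⟫ = η i * γ i)
    (zhat Δqhat : EuclideanSpace ℝ (Fin d))
    (hzhat : zhat = z - ∑ i ∈ Finset.univ.filter (fun i : Fin d => (i : ℕ) < m),
      ⟪z, e i⟫ • e i)
    (hΔqhat : Δqhat = Δq - ∑ i ∈ Finset.univ.filter (fun i : Fin d => (i : ℕ) < m),
      ⟪Δq, e i⟫ • e i)
    (hcorrect : y * ⟪z, Δq⟫ > 0)
    (hremoved : y * ⟪z - zhat, Δq⟫ > 0)
    (hcausal : y * ⟪zhat, Δp⟫ > 0)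
    (hsign : Real.sign (∑ i ∈ Finset.univ.filter (fun i : Fin d => m ≤ (i : ℕ)),
        η i * (α i * γ i)) =
      Real.sign (∑ i ∈ Finset.univ.filter (fun i : Fin d => m ≤ (i : ℕ)), α i * γ i)) :
    y * ⟪zhat, Δqhat⟫ > 0 := by
  have hortho := e.orthonormal
  have hee : ∀ i j : Fin d, ⟪e i, e j⟫ = if i = j then (1:ℝ) else 0 := by
    intro i j
    exact orthonormal_iff_ite.mp hortho i j
  -- coefficients of zhat
  have hz_coeff : ∀ j : Fin d, ⟪zhat, e j⟫ = if m ≤ (j:ℕ) then α j else 0 := by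
    intro j
    rw [hzhat, inner_sub_left, sum_inner]
    simp only [inner_smul_left, RCLike.star_def, conj_trivial, hee, mul_ite, mul_one,
      mul_zero]
    rw [Finset.sum_ite_eq' (Finset.univ.filter (fun i : Fin d => (i:ℕ) < m)) j
      (fun i => ⟪z, e i⟫)]
    by_cases h : (j:ℕ) < m
    · simp [h, Nat.not_le.mpr h, hα]
    · simp [h, Nat.le_of_not_lt h, hα]
  have hq_coeff : ∀ j : Fin d, ⟪Δqhat, e j⟫ = if m ≤ (j:ℕ) then γ j else 0 := by
    intro j
    rw [hΔqhat, inner_sub_left, sum_inner]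
    simp only [inner_smul_left, RCLike.star_def, conj_trivial, hee, mul_ite, mul_one,
      mul_zero]
    rw [Finset.sum_ite_eq' (Finset.univ.filter (fun i : Fin d => (i:ℕ) < m)) j
      (fun i => ⟪Δq, e i⟫)]
    by_cases h : (j:ℕ) < m
    · simp [h, Nat.not_le.mpr h, hγ]
    · simp [h, Nat.le_of_not_lt h, hγ]
  have key : ∀ w : EuclideanSpace ℝ (Fin d),
      ⟪zhat, w⟫ = ∑ i ∈ Finset.univ.filter (fun i : Fin d => m ≤ (i:ℕ)),
        α i * ⟪w, e i⟫ := by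
    intro w
    rw [← e.sum_inner_mul_inner zhat w]
    rw [← Finset.sum_filter_add_sum_filter_not Finset.univ (fun i : Fin d => m ≤ (i:ℕ))]
    have h1 : ∀ i ∈ Finset.univ.filter (fun i : Fin d => m ≤ (i:ℕ)),
        ⟪zhat, e i⟫ * ⟪e i, w⟫ = α i * ⟪w, e i⟫ := by
      intro i hi
      simp only [Finset.mem_filter] at hi
      rw [hz_coeff, if_pos hi.2, real_inner_comm]
    have h2 : ∀ i ∈ Finset.univ.filter (fun i : Fin d => ¬ m ≤ (i:ℕ)),
        ⟪zhat, e i⟫ * ⟪e i, w⟫ = 0 := by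
      intro i hi
      simp only [Finset.mem_filter] at hi
      rw [hz_coeff, if_neg hi.2, zero_mul]
    rw [Finset.sum_congr rfl h1, Finset.sum_congr rfl h2, Finset.sum_const_zero, add_zero]
  have hzq : ⟪zhat, Δqhat⟫ = ∑ i ∈ Finset.univ.filter (fun i : Fin d => m ≤ (i:ℕ)),
      α i * γ i := by
    rw [key]
    refine Finset.sum_congr rfl fun i hi => ?_
    simp only [Finset.mem_filter] at hi
    rw [hq_coeff, if_pos hi.2]
  have hzp : ⟪zhat, Δp⟫ = ∑ i ∈ Finset.univ.filter (fun i : Fin d => m ≤ (i:ℕ)),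
      η i * (α i * γ i) := by
    rw [key]
    refine Finset.sum_congr rfl fun i hi => ?_
    rw [hη]; ring
  rw [hzq]
  rw [hzp] at hcausal
  set S := ∑ i ∈ Finset.univ.filter (fun i : Fin d => m ≤ (i:ℕ)), α i * γ i with hS
  set T := ∑ i ∈ Finset.univ.filter (fun i : Fin d => m ≤ (i:ℕ)), η i * (α i * γ i) with hT
  rcases hy with hy | hy
  · subst hy
    rw [one_mul] at hcausal ⊢
    have : Real.sign T = 1 := Real.sign_of_pos hcausal
    rw [this] at hsign
    exact pos_of_sign_eq_one hsign.symm
  · subst hy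
    have hT0 : T < 0 := by nlinarith
    have : Real.sign T = -1 := Real.sign_of_neg hT0
    rw [this] at hsign
    have : S < 0 := neg_of_sign_eq_neg_one hsign.symm
    nlinarith
end
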